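/- Let n ≥ 1 be an integer, θ ∈ (0,1), c ≥ 1 an integer, F a finite family of nonempty subsets of {1,…,n}, and π : F → ℝ with π(S) > 0 for all S ∈ F. Let p be a schedule with p_i > 0 for every i and Σ_{z=1}^n p_z W_z(p) > 0. If the WIGGINS update leaves p unchanged, i.e., p_i W_i(p) / (Σ_{z=1}^n p_z W_z(p)) = p_i for every i, then p is an optimal schedule: cost_θ(p) ≤ cost_θ(q) for every schedule q. -/
import Mathlib

lemma pow_tangent (c : ℕ) (u v : ℝ) (hu : 0 ≤ u) (hv : 0 ≤ v) :
    ((c : ℝ) + 1) * u ^ c * (v - u) ≤ v ^ (c + 1) - u ^ (c + 1) := by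
  induction c with
  | zero => simp
  | succ c ih =>
    simp only [pow_succ] at ih ⊢
    have h1 : v * (((c:ℝ)+1) * u ^ c * (v-u)) ≤ v * (v ^ c * v - u ^ c * u) :=
      mul_le_mul_of_nonneg_left ih hv
    have h2 : (0:ℝ) ≤ ((c:ℝ)+1) * u ^ c * (v-u)^2 := by positivity
    push_cast
    nlinarith [h1, h2]

lemma tangent (θ w : ℝ) (hθ0 : 0 < θ) (hθ1 : θ < 1) (hw : 0 < w)
    (c : ℕ) (hc : 1 ≤ c) (u v : ℝ) (hu0 : 0 ≤ u) (hu1 : u ≤ 1)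
    (hv0 : 0 ≤ v) (hv1 : v ≤ 1) :
    w / (1 - θ * u ^ c) + θ * c * w * u ^ (c - 1) / (1 - θ * u ^ c) ^ 2 * (v - u)
      ≤ w / (1 - θ * v ^ c) := by
  obtain ⟨d, rfl⟩ : ∃ d, c = d + 1 := ⟨c - 1, (Nat.succ_pred_eq_of_pos hc).symm⟩
  have hA : 0 < 1 - θ * u ^ (d + 1) := by
    have : θ * u ^ (d + 1) ≤ θ * 1 := by
      apply mul_le_mul_of_nonneg_left (pow_le_one₀ hu0 hu1) hθ0.le
    linarith
  have hB : 0 < 1 - θ * v ^ (d + 1) := by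
    have : θ * v ^ (d + 1) ≤ θ * 1 := by
      apply mul_le_mul_of_nonneg_left (pow_le_one₀ hv0 hv1) hθ0.le
    linarith
  have key : ((d : ℝ) + 1) * u ^ d * (v - u) ≤ v ^ (d + 1) - u ^ (d + 1) :=
    pow_tangent d u v hu0 hv0
  have h1 : w / (1 - θ * v ^ (d+1)) - w / (1 - θ * u ^ (d+1))
      = θ * w * (v ^ (d+1) - u ^ (d+1)) / ((1 - θ * u ^ (d+1)) * (1 - θ * v ^ (d+1))) := by
    field_simp
    ring
  have h2 : θ * ((d:ℝ)+1) * w * u ^ d / (1 - θ * u ^ (d+1)) ^ 2 * (v - u)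
      ≤ θ * w * (v ^ (d+1) - u ^ (d+1)) / ((1 - θ * u ^ (d+1)) * (1 - θ * v ^ (d+1))) := by
    rw [div_mul_eq_mul_div, div_le_div_iff₀ (by positivity) (by positivity)]
    nlinarith [mul_nonneg (mul_nonneg (mul_nonneg hA.le hB.le) (mul_pos hθ0 hw).le)
        (sub_nonneg.2 key),
      mul_nonneg (mul_nonneg hA.le (mul_pos (mul_pos hθ0 hθ0) hw).le)
        (sq_nonneg (v ^ (d+1) - u ^ (d+1)))]
  have h3 : ((d:ℝ) + 1 + 1 - 1) = (d:ℝ) + 1 := by ring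
  simp only [Nat.add_sub_cancel]
  push_cast
  linarith [h1, h2]

-- double counting
lemma double_count {n : ℕ} (F : Finset (Finset (Fin n))) (f : Finset (Fin n) → Fin n → ℝ) :
    ∑ S ∈ F, ∑ i ∈ S, f S i
      = ∑ i : Fin n, ∑ S ∈ F.filter (fun S => i ∈ S), f S i := by
  have h1 : ∀ S ∈ F, ∑ i ∈ S, f S i = ∑ i : Fin n, if i ∈ S then f S i else 0 := by
    intro S _
    rw [Finset.sum_ite_mem, Finset.univ_inter]
  rw [Finset.sum_congr rfl h1, Finset.sum_comm]
  exact Finset.sum_congr rfl fun i _ => (Finset.sum_filter _ _).symm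

/-- If `p` is a schedule with all entries positive,
`Σ_z p_z W_z(p) > 0`, and the WIGGINS update leaves `p` unchanged, then `p` is an
optimal schedule: `cost_θ(p) ≤ cost_θ(q)` for every schedule `q`. -/
theorem stmt11 (n : ℕ) (hn : 1 ≤ n) (θ : ℝ) (hθ : θ ∈ Set.Ioo (0 : ℝ) 1)
    (c : ℕ) (hc : 1 ≤ c) (F : Finset (Finset (Fin n)))
    (hF : ∀ S ∈ F, S.Nonempty)
    (π : Finset (Fin n) → ℝ) (hπ : ∀ S ∈ F, 0 < π S)
    (cost : (Fin n → ℝ) → ℝ)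
    (hcost : ∀ p, cost p = ∑ S ∈ F, π S / (1 - θ * (1 - ∑ i ∈ S, p i) ^ c))
    (W : (Fin n → ℝ) → Fin n → ℝ)
    (hW : ∀ p i, W p i = ∑ S ∈ F.filter (fun S => i ∈ S),
        θ * c * π S * (1 - ∑ j ∈ S, p j) ^ (c - 1)
          / (1 - θ * (1 - ∑ j ∈ S, p j) ^ c) ^ 2)
    (p : Fin n → ℝ) (hp : p ∈ stdSimplex ℝ (Fin n))
    (hpos : ∀ i, 0 < p i) (hsum : 0 < ∑ z, p z * W p z)
    (hfix : ∀ i, p i * W p i / (∑ z, p z * W p z) = p i) :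
    ∀ q ∈ stdSimplex ℝ (Fin n), cost p ≤ cost q := by
  obtain ⟨hθ0, hθ1⟩ := hθ
  obtain ⟨hp0, hp1⟩ := hp
  intro q hq
  obtain ⟨hq0, hq1⟩ := hq
  -- all W p i equal the common value L
  set L := ∑ z, p z * W p z with hL
  have hWeq : ∀ i, W p i = L := by
    intro i
    have h := hfix i
    rw [div_eq_iff hsum.ne'] at h
    exact mul_left_cancel₀ (hpos i).ne' (by linarith [h])
  -- bounds on partial sums
  have hpS : ∀ S : Finset (Fin n), 0 ≤ ∑ i ∈ S, p i ∧ ∑ i ∈ S, p i ≤ 1 := by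
    intro S
    constructor
    · exact Finset.sum_nonneg fun i _ => hp0 i
    · rw [← hp1]
      exact Finset.sum_le_sum_of_subset_of_nonneg (Finset.subset_univ S)
        fun i _ _ => hp0 i
  have hqS : ∀ S : Finset (Fin n), 0 ≤ ∑ i ∈ S, q i ∧ ∑ i ∈ S, q i ≤ 1 := by
    intro S
    constructor
    · exact Finset.sum_nonneg fun i _ => hq0 i
    · rw [← hq1]
      exact Finset.sum_le_sum_of_subset_of_nonneg (Finset.subset_univ S)
        fun i _ _ => hq0 i
  -- D S : the gradient weight of set S
  set D : Finset (Fin n) → ℝ := fun S =>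
    θ * c * π S * (1 - ∑ j ∈ S, p j) ^ (c - 1)
      / (1 - θ * (1 - ∑ j ∈ S, p j) ^ c) ^ 2 with hD
  -- per-term tangent inequality
  have hterm : ∀ S ∈ F,
      π S / (1 - θ * (1 - ∑ i ∈ S, p i) ^ c)
        + D S * ((∑ i ∈ S, p i) - (∑ i ∈ S, q i))
      ≤ π S / (1 - θ * (1 - ∑ i ∈ S, q i) ^ c) := by
    intro S hS
    have h := tangent θ (π S) hθ0 hθ1 (hπ S hS) c hc
      (1 - ∑ i ∈ S, p i) (1 - ∑ i ∈ S, q i)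
      (by linarith [(hpS S).2]) (by linarith [(hpS S).1])
      (by linarith [(hqS S).2]) (by linarith [(hqS S).1])
    have e : (1 - ∑ i ∈ S, q i) - (1 - ∑ i ∈ S, p i)
        = (∑ i ∈ S, p i) - (∑ i ∈ S, q i) := by ring
    rw [e] at h
    exact h
  -- the correction term vanishes
  have hzero : ∑ S ∈ F, D S * ((∑ i ∈ S, p i) - (∑ i ∈ S, q i)) = 0 := by
    have h1 : ∀ S ∈ F, D S * ((∑ i ∈ S, p i) - (∑ i ∈ S, q i))
        = ∑ i ∈ S, D S * (p i - q i) := by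
      intro S _
      rw [← Finset.sum_sub_distrib, Finset.mul_sum]
    rw [Finset.sum_congr rfl h1, double_count]
    have h2 : ∀ i : Fin n, ∑ S ∈ F.filter (fun S => i ∈ S), D S * (p i - q i)
        = (p i - q i) * W p i := by
      intro i
      rw [hW, Finset.mul_sum]
      exact Finset.sum_congr rfl fun S _ => by rw [hD]; ring
    rw [Finset.sum_congr rfl fun i _ => h2 i]
    have h3 : ∀ i : Fin n, (p i - q i) * W p i = L * p i - L * q i := by
      intro i; rw [hWeq i]; ring
    rw [Finset.sum_congr rfl fun i _ => h3 i, Finset.sum_sub_distrib,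
      ← Finset.mul_sum, ← Finset.mul_sum, hp1, hq1]
    ring
  calc cost p = ∑ S ∈ F, π S / (1 - θ * (1 - ∑ i ∈ S, p i) ^ c) := hcost p
    _ = ∑ S ∈ F, (π S / (1 - θ * (1 - ∑ i ∈ S, p i) ^ c)
          + D S * ((∑ i ∈ S, p i) - (∑ i ∈ S, q i))) := by
        rw [Finset.sum_add_distrib, hzero, add_zero]
    _ ≤ ∑ S ∈ F, π S / (1 - θ * (1 - ∑ i ∈ S, q i) ^ c) := Finset.sum_le_sum hterm
    _ = cost q := (hcost q).symm
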